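/- Small support, part (a): Let n ∈ ℤ≥0, let N ∈ ℤ>0, let b ∈ [N/(N+1), 2N/(2N+1)), and let g ∈ V^n₊(ℝ). Define z : [0,1] → ℂ by z(x) = b·ψ(x)/g(x) for x ∈ [0, 1−N(1/b−1)], z(x) = z_mid(x) for x ∈ (1−N(1/b−1), N(1/b−1)), and z(x) = −b·ψ(x)/g(x−1) for x ∈ [N(1/b−1), 1], where z_mid : (1−N(1/b−1), N(1/b−1)) → ℂ is an arbitrary measurable function. Then the dual window h_z has compact support contained in [−N, N]. -/

import Mathlib

open MeasureTheory Filter Topology Set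

noncomputable section

attribute [local instance] Classical.propDecidable

/-- `kmax b` is the largest nonnegative integer strictly smaller than `b/(1-b)`. -/
def kmax (b : ℝ) : ℕ := ⌈b / (1 - b)⌉₊ - 1

/-- The window class `V⁺ⁿ(ℝ)`: `Cⁿ` functions with support exactly `[-1,1]`,
nonvanishing on `(-1,1)`. -/
def Vplus (n : ℕ) (g : ℝ → ℂ) : Prop :=
  ContDiff ℝ n g ∧ tsupport g = Set.Icc (-1 : ℝ) 1 ∧ ∀ x ∈ Set.Ioo (-1 : ℝ) 1, g x ≠ 0

/-- The `1`-periodic function `ψ(x) = 1 / ∑ₙ g(x+n)`. -/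
def psiFun (g : ℝ → ℂ) (x : ℝ) : ℂ := 1 / ∑' n : ℤ, g (x + n)

/-- The auxiliary function `γ_k` (translated so that it is defined near `[k/b, k+1]`). -/
def gammaAux (b : ℝ) (g z : ℝ → ℂ) (k : ℕ) (x : ℝ) : ℂ :=
  (-1 : ℂ) ^ k *
    (∏ j ∈ Finset.Icc 1 k,
      g (x - k - 1 - j * (1 / b - 1)) / g (x - k - j * (1 / b - 1))) *
    (g (x - k - 1) * z (x - k) + (b : ℂ) * psiFun g (x - k))

/-- The auxiliary function `η_k` (translated so that it is defined near `[-k-1, -k/b]`). -/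
def etaAux (b : ℝ) (g z : ℝ → ℂ) (k : ℕ) (x : ℝ) : ℂ :=
  (-1 : ℂ) ^ k *
    (∏ j ∈ Finset.Icc 1 k,
      g (x + k + 1 + j * (1 / b - 1)) / g (x + k + j * (1 / b - 1))) *
    (-(g (x + k + 1) * z (x + k + 1)) + (b : ℂ) * psiFun g (x + k + 1))

/-- The dual window candidate `h_z`, defined piecewise (the pieces are pairwise disjoint). -/
def hz (b : ℝ) (g z : ℝ → ℂ) (x : ℝ) : ℂ :=
  (starRingEnd ℂ)
    (if x ∈ Set.Ico (-1 : ℝ) 0 then etaAux b g z 0 x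
     else if x ∈ Set.Icc (0 : ℝ) 1 then gammaAux b g z 0 x
     else if hk : ∃ k : ℕ, 1 ≤ k ∧ k ≤ kmax b ∧ x ∈ Set.Icc ((k : ℝ) / b) ((k : ℝ) + 1) then
       gammaAux b g z hk.choose x
     else if hk : ∃ k : ℕ, 1 ≤ k ∧ k ≤ kmax b ∧ x ∈ Set.Icc (-(k : ℝ) - 1) (-(k : ℝ) / b) then
       etaAux b g z hk.choose x
     else 0)

/-- The time–frequency shift `M_{bm} T_k w`. -/
def timeFreqShift (b : ℝ) (m k : ℤ) (w : ℝ → ℂ) : ℝ → ℂ :=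
  fun x => Complex.exp (2 * Real.pi * Complex.I * (b : ℂ) * (m : ℂ) * (x : ℂ)) * w (x - k)

/-- The Gabor coefficient `⟨f, M_{bm} T_k w⟩` in `L²(ℝ)`. -/
def gaborCoef (b : ℝ) (w f : ℝ → ℂ) (m k : ℤ) : ℂ :=
  ∫ x : ℝ, f x * (starRingEnd ℂ) (timeFreqShift b m k w x)

/-- The Gabor system `G(w,1,b)` is a Bessel system. -/
def GaborBessel (b : ℝ) (w : ℝ → ℂ) : Prop :=
  MemLp w 2 (volume : Measure ℝ) ∧
  ∃ B > (0 : ℝ), ∀ f : ℝ → ℂ, MemLp f 2 (volume : Measure ℝ) →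
    ∑' mk : ℤ × ℤ, ‖gaborCoef b w f mk.1 mk.2‖ ^ 2 ≤ B * ∫ x : ℝ, ‖f x‖ ^ 2

/-- `G(g,1,b)` and `G(h,1,b)` are dual frames: both Bessel, and every `f ∈ L²(ℝ)` has the
reconstruction `f = ∑_{m,k} ⟨f, M_{bm}T_k g⟩ M_{bm}T_k h` with unconditional `L²`-convergence. -/
def GaborDualFrames (b : ℝ) (g h : ℝ → ℂ) : Prop :=
  GaborBessel b g ∧ GaborBessel b h ∧
  ∀ f : Lp ℂ 2 (volume : Measure ℝ),
    ∃ F : ℤ × ℤ → Lp ℂ 2 (volume : Measure ℝ),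
      (∀ mk : ℤ × ℤ, (F mk : ℝ → ℂ) =ᵐ[volume]
        fun x => gaborCoef b g (f : ℝ → ℂ) mk.1 mk.2 * timeFreqShift b mk.1 mk.2 h x) ∧
      HasSum F f

/-- `F` has a simple discontinuity at `x₀`: both one-sided limits exist but differ. -/
def SimpleDiscontAt (F : ℝ → ℂ) (x₀ : ℝ) : Prop :=
  ∃ l r : ℂ, Tendsto F (𝓝[<] x₀) (𝓝 l) ∧ Tendsto F (𝓝[>] x₀) (𝓝 r) ∧ l ≠ r

/-- `f` is piecewise `C^{n+1}` with seam points contained in the finite set `s`: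
`f` is `C^{n+1}` off `s`, and at each point of `s` the one-sided limits of the
`(n+1)`-st derivative exist. -/
def PiecewiseCn1 (n : ℕ) (f : ℝ → ℂ) (s : Finset ℝ) : Prop :=
  (∀ y : ℝ, y ∉ s → ContDiffAt ℝ (n + 1) f y) ∧
  ∀ y ∈ s, (∃ l, Tendsto (iteratedDeriv (n + 1) f) (𝓝[<] y) (𝓝 l)) ∧
           (∃ r, Tendsto (iteratedDeriv (n + 1) f) (𝓝[>] y) (𝓝 r))

/-- **Small support, part (a).** -/
theorem statement15 (n : ℕ) (N : ℕ) (hN : 0 < N) (b : ℝ)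
    (hb : b ∈ Set.Ico ((N : ℝ) / ((N : ℝ) + 1)) ((2 * (N : ℝ)) / (2 * (N : ℝ) + 1)))
    (g : ℝ → ℂ) (hg : Vplus n g) (z : ℝ → ℂ) (hzmeas : Measurable z)
    (hz1 : ∀ x ∈ Set.Icc (0 : ℝ) (1 - (N : ℝ) * (1 / b - 1)),
      z x = (b : ℂ) * psiFun g x / g x)
    (hz3 : ∀ x ∈ Set.Icc ((N : ℝ) * (1 / b - 1)) 1,
      z x = -((b : ℂ) * psiFun g x / g (x - 1))) :
    tsupport (hz b g z) ⊆ Set.Icc (-(N : ℝ)) (N : ℝ) := by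
  obtain ⟨hb1, hb2⟩ := hb
  have hNpos : (0 : ℝ) < N := by exact_mod_cast hN
  have hN1 : (1 : ℝ) ≤ N := by exact_mod_cast hN
  have hb0 : 0 < b := lt_of_lt_of_le (by positivity) hb1
  have hblt1 : b < 1 := by
    have h2 : (2 * (N : ℝ)) / (2 * N + 1) < 1 := by
      rw [div_lt_one (by positivity)]; linarith
    linarith
  have hib : 0 < 1 / b - 1 := by
    have := one_lt_one_div hb0 hblt1
    linarith
  refine closure_minimal (fun x hx => ?_) isClosed_Icc
  by_contra hxI
  apply hx
  have hx' : x < -(N : ℝ) ∨ (N : ℝ) < x := by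
    rcases lt_or_ge x (-(N : ℝ)) with h | h
    · exact Or.inl h
    rcases le_or_gt x (N : ℝ) with h' | h'
    · exact absurd ⟨h, h'⟩ hxI
    · exact Or.inr h'
  have h1 : x ∉ Set.Ico (-1 : ℝ) 0 := by
    rintro ⟨ha, hbb⟩
    rcases hx' with h | h
    · linarith
    · linarith
  have h2 : x ∉ Set.Icc (0 : ℝ) 1 := by
    rintro ⟨ha, hbb⟩
    rcases hx' with h | h
    · linarith
    · linarith
  show hz b g z x = 0
  unfold hz
  rw [if_neg h1, if_neg h2]
  split_ifs with hk1 hk2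
  · -- gamma branch
    obtain ⟨hka, hkb, hkc⟩ := hk1.choose_spec
    set k := hk1.choose with hkdef
    obtain ⟨hxl, hxr⟩ := hkc
    have hk1R : (1 : ℝ) ≤ k := by exact_mod_cast hka
    have hxpos : (0 : ℝ) < x := lt_of_lt_of_le (by positivity) hxl
    have hxgtN : (N : ℝ) < x := by
      rcases hx' with h | h
      · linarith
      · exact h
    have hNk : (N : ℝ) ≤ k := by
      have : (N : ℝ) < (k : ℝ) + 1 := lt_of_lt_of_le hxgtN hxr
      exact_mod_cast Nat.lt_add_one_iff.mp (by exact_mod_cast this)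
    set y := x - (k : ℝ) with hydef
    have hy1 : y ≤ 1 := by simp only [hydef]; linarith
    have hyk : (k : ℝ) * (1 / b - 1) ≤ y := by
      have : (k : ℝ) / b - k = (k : ℝ) * (1 / b - 1) := by ring
      simp only [hydef]; linarith [hxl, this]
    have hyN : (N : ℝ) * (1 / b - 1) ≤ y :=
      le_trans (mul_le_mul_of_nonneg_right hNk (le_of_lt hib)) hyk
    have hy0 : 0 < y :=
      lt_of_lt_of_le (by nlinarith) hyk
    have hgne : g (y - 1) ≠ 0 := hg.2.2 _ ⟨by linarith, by linarith⟩
    have hzval : z y = -((b : ℂ) * psiFun g y / g (y - 1)) := hz3 y ⟨hyN, hy1⟩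
    have key : g (x - k - 1) * z (x - k) + (b : ℂ) * psiFun g (x - k) = 0 := by
      have hxy : x - (k : ℝ) = y := rfl
      rw [hxy, show x - (k : ℝ) - 1 = y - 1 from rfl, hzval]
      field_simp
      ring
    unfold gammaAux
    rw [key, mul_zero, map_zero]
  · -- eta branch
    obtain ⟨hka, hkb, hkc⟩ := hk2.choose_spec
    set k := hk2.choose with hkdef
    obtain ⟨hxl, hxr⟩ := hkc
    have hk1R : (1 : ℝ) ≤ k := by exact_mod_cast hka
    have hxneg : x < 0 := by
      have : -(k : ℝ) / b < 0 := by
        apply div_neg_of_neg_of_pos _ hb0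
        linarith
      linarith
    have hxltN : x < -(N : ℝ) := by
      rcases hx' with h | h
      · exact h
      · linarith
    have hNk : (N : ℝ) ≤ k := by
      have : (N : ℝ) < (k : ℝ) + 1 := by linarith
      exact_mod_cast Nat.lt_add_one_iff.mp (by exact_mod_cast this)
    set y := x + (k : ℝ) + 1 with hydef
    have hy0 : 0 ≤ y := by simp only [hydef]; linarith
    have hyk : y ≤ 1 - (k : ℝ) * (1 / b - 1) := by
      have : -(k : ℝ) / b = -((k : ℝ) * (1 / b - 1)) - k := by ring
      simp only [hydef]; linarith [hxr, this]
    have hyN : y ≤ 1 - (N : ℝ) * (1 / b - 1) := by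
      have := mul_le_mul_of_nonneg_right hNk (le_of_lt hib)
      linarith
    have hy1 : y < 1 := lt_of_le_of_lt hyk (by nlinarith)
    have hgne : g y ≠ 0 := hg.2.2 _ ⟨by linarith, hy1⟩
    have hzval : z y = (b : ℂ) * psiFun g y / g y := hz1 y ⟨hy0, hyN⟩
    have key : -(g (x + k + 1) * z (x + k + 1)) + (b : ℂ) * psiFun g (x + k + 1) = 0 := by
      rw [show x + (k : ℝ) + 1 = y from rfl, hzval]
      field_simp
      ring
    unfold etaAux
    rw [key, mul_zero, map_zero]
  · exact map_zero _

end
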